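/- If τ is the uniform density on [0, r₀], the spherical balancing equation (2α − 1)∫_{r*}^{r₀}(r − r*)τ dr = (1 − α)(∫_0^{r*}(r + r*)τ dr + ∫_{r*}^{r₀} 2r* τ dr) is solved by r*(α) = ((1 − √(1 + α − 2α²))/α) · r₀ for α ∈ (1/2, 1]. -/

import Mathlib

open intervalIntegral

/-- The closed-form solution of the balancing equation for the uniform density. -/
noncomputable def rstarUnif (α r₀ : ℝ) : ℝ := ((1 - Real.sqrt (1 + α - 2*α^2)) / α) * r₀

lemma integ1 (a b c k : ℝ) : (∫ r in a..b, (r - c) * k) = ((b^2 - a^2)/2 - c*(b-a)) * k := by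
  rw [intervalIntegral.integral_mul_const,
    intervalIntegral.integral_sub intervalIntegral.intervalIntegrable_id
      intervalIntegrable_const, integral_id, integral_const, smul_eq_mul]
  ring

lemma integ2 (a b c k : ℝ) : (∫ r in a..b, (r + c) * k) = ((b^2 - a^2)/2 + c*(b-a)) * k := by
  rw [intervalIntegral.integral_mul_const,
    intervalIntegral.integral_add intervalIntegral.intervalIntegrable_id
      intervalIntegrable_const, integral_id, integral_const, smul_eq_mul]
  ring

/-- For the uniform density `τ = 1/r₀` on `[0, r₀]`, the spherical balancing equation is
solved by `r*(α) = ((1 − √(1 + α − 2α²))/α)·r₀`, which lies in `[0, r₀]`. -/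
theorem stmt8 (r₀ : ℝ) (hr₀ : 0 < r₀) (α : ℝ) (hα : α ∈ Set.Ioc (1/2:ℝ) 1) :
    rstarUnif α r₀ ∈ Set.Icc 0 r₀ ∧
    (2*α - 1) * (∫ r in (rstarUnif α r₀)..r₀, (r - rstarUnif α r₀) * (1/r₀)) =
    (1 - α) * ((∫ r in (0:ℝ)..(rstarUnif α r₀), (r + rstarUnif α r₀) * (1/r₀)) +
      ∫ r in (rstarUnif α r₀)..r₀, 2 * rstarUnif α r₀ * (1/r₀)) := by
  obtain ⟨hα1, hα2⟩ := hα
  have hαpos : 0 < α := by linarith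
  set s := Real.sqrt (1 + α - 2*α^2) with hs
  have hnn : (0:ℝ) ≤ 1 + α - 2*α^2 := by nlinarith
  have hs2 : s^2 = 1 + α - 2*α^2 := Real.sq_sqrt hnn
  have hs0 : 0 ≤ s := Real.sqrt_nonneg _
  have hsle : s ≤ 1 := by nlinarith
  have hsge : 1 - α ≤ s := by nlinarith
  have hαne : α ≠ 0 := ne_of_gt hαpos
  have hrne : r₀ ≠ 0 := ne_of_gt hr₀
  have hmem : rstarUnif α r₀ ∈ Set.Icc 0 r₀ := by
    constructor
    · exact mul_nonneg (div_nonneg (by linarith) hαpos.le) hr₀.le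
    · unfold rstarUnif
      rw [div_mul_eq_mul_div, div_le_iff₀ hαpos]
      nlinarith
  refine ⟨hmem, ?_⟩
  rw [integ1, integ2, intervalIntegral.integral_const, smul_eq_mul]
  unfold rstarUnif
  field_simp
  linear_combination (α*r₀^2) * hs2
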